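/- Let φ : Y → X be a continuous map between Hausdorff topological spaces and let Z = Y ∪̇_φ X. If X is second countable and the countable power Y^ω is hereditarily separable, then the countable power Z^ω is hereditarily separable. -/

import Mathlib

/-- The topology of `Z = Y ∪̇_φ X` on the disjoint union `X ⊕ Y`: it is generated by the base
consisting of (a) all open subsets of `Y` and
(b) all sets `[U,K] = U ∪ (φ⁻¹(U) \ K)` with `U` open in `X` and `K` compact in `Y`. -/
def dotCup {X Y : Type*} [TopologicalSpace X] [TopologicalSpace Y] (φ : Y → X) :
    TopologicalSpace (X ⊕ Y) :=
  TopologicalSpace.generateFrom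
    ({s | ∃ V : Set Y, IsOpen V ∧ s = Sum.inr '' V} ∪
     {s | ∃ (U : Set X) (K : Set Y), IsOpen U ∧ IsCompact K ∧
        s = Sum.inl '' U ∪ Sum.inr '' (φ ⁻¹' U \ K)})

/-- A topological space is hereditarily separable iff every subspace is separable. -/
def HereditarilySeparable (W : Type*) [TopologicalSpace W] : Prop :=
  ∀ s : Set W, TopologicalSpace.SeparableSpace s

section Lemmas

open TopologicalSpace Set

/-- General reduction lemma: a subset `S` of `W` is separable provided there is a countable
family of subsets `T i ⊆ S` together with (arbitrary) maps `q i : T i → M i` into hereditarily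
separable spaces, such that every neighborhood of a point of `S` can be "detected" through some
`q i`. -/
lemma lemL {W : Type*} [TopologicalSpace W] (S : Set W)
    {ι : Type*} [Countable ι] (T : ι → Set W) (hTS : ∀ i, T i ⊆ S)
    (M : ι → Type*) [∀ i, TopologicalSpace (M i)] (hM : ∀ i, HereditarilySeparable (M i))
    (q : ∀ i, T i → M i)
    (h : ∀ w, w ∈ S → ∀ O : Set W, IsOpen O → w ∈ O →
      ∃ i, ∃ hw' : w ∈ T i, ∃ O' : Set (M i), IsOpen O' ∧ q i ⟨w, hw'⟩ ∈ O' ∧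
        ∀ w', (hw'' : w' ∈ T i) → q i ⟨w', hw''⟩ ∈ O' → w' ∈ O) :
    TopologicalSpace.SeparableSpace S := by
  classical
  have key : ∀ i, ∃ D : Set (T i), D.Countable ∧
      ∀ z : T i, ∀ O' : Set (M i), IsOpen O' → q i z ∈ O' → ∃ d ∈ D, q i d ∈ O' := by
    intro i
    haveI := hM i (Set.range (q i))
    obtain ⟨D₀, hD₀c, hD₀d⟩ := TopologicalSpace.exists_countable_dense (Set.range (q i))
    have hpre : ∀ d : Set.range (q i), ∃ z : T i, q i z = (d : M i) := fun d => d.2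
    choose pre hpre using hpre
    refine ⟨pre '' D₀, hD₀c.image _, ?_⟩
    intro z O' hO' hz
    have hopen : IsOpen ((Subtype.val : Set.range (q i) → M i) ⁻¹' O') :=
      hO'.preimage continuous_subtype_val
    have hne : ((Subtype.val : Set.range (q i) → M i) ⁻¹' O').Nonempty :=
      ⟨⟨q i z, ⟨z, rfl⟩⟩, hz⟩
    obtain ⟨d, hdO, hdD⟩ := hD₀d.inter_open_nonempty _ hopen hne
    exact ⟨pre d, ⟨d, hdD, rfl⟩, by rw [hpre d]; exact hdO⟩
  choose D hDc hDd using key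
  refine ⟨⟨⋃ i, (fun z : T i => (⟨z.1, hTS i z.2⟩ : S)) '' (D i),
    Set.countable_iUnion fun i => (hDc i).image _, ?_⟩⟩
  intro x
  rw [mem_closure_iff]
  intro o ho hxo
  obtain ⟨O, hOopen, rfl⟩ := isOpen_induced_iff.1 ho
  obtain ⟨i, hwT, O', hO'open, hqw, himp⟩ := h x.1 x.2 O hOopen hxo
  obtain ⟨d, hdD, hdO'⟩ := hDd i ⟨x.1, hwT⟩ O' hO'open hqw
  refine ⟨⟨d.1, hTS i d.2⟩, ?_, Set.mem_iUnion.2 ⟨i, ⟨d, hdD, rfl⟩⟩⟩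
  have := himp d.1 d.2 (by convert hdO' using 2)
  exact this

lemma hs_of_surj {A B : Type*} [TopologicalSpace A] [TopologicalSpace B]
    (hA : HereditarilySeparable A) {f : A → B} (hf : Continuous f)
    (hs : Function.Surjective f) : HereditarilySeparable B := by
  intro s
  haveI := hA (f ⁻¹' s)
  have hmt : Set.MapsTo f (f ⁻¹' s) s := fun a ha => ha
  have hsurj : Function.Surjective (Set.MapsTo.restrict f _ _ hmt) := by
    rintro ⟨b, hb⟩
    obtain ⟨a, rfl⟩ := hs b
    exact ⟨⟨a, hb⟩, rfl⟩
  exact hsurj.denseRange.separableSpace (hf.restrict hmt)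

lemma hs_finsetPi {Y : Type*} [TopologicalSpace Y]
    (hY : HereditarilySeparable (ℕ → Y)) (G : Finset ℕ) :
    HereditarilySeparable (↥G → Y) := by
  classical
  cases isEmpty_or_nonempty Y with
  | inl h =>
    intro s
    exact ⟨⟨Set.univ, Set.countable_univ, dense_univ⟩⟩
  | inr h =>
    refine hs_of_surj hY (f := fun g (n : ↥G) => g n.1)
      (continuous_pi fun n => continuous_apply _) ?_
    intro σ
    refine ⟨fun n => if h' : n ∈ G then σ ⟨n, h'⟩ else Classical.arbitrary Y, ?_⟩
    funext n
    simp [n.2]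

end Lemmas



section DCsec

variable {X Y : Type*} [TopologicalSpace X] [TopologicalSpace Y]

/-- Type synonym carrying the `dotCup` topology. -/
def DC (φ : Y → X) : Type _ := X ⊕ Y

instance (φ : Y → X) : TopologicalSpace (DC φ) := dotCup φ

def dcSets (φ : Y → X) : Set (Set (X ⊕ Y)) :=
  {s | ∃ V : Set Y, IsOpen V ∧ s = Sum.inr '' V} ∪
  {s | ∃ (U : Set X) (K : Set Y), IsOpen U ∧ IsCompact K ∧
      s = Sum.inl '' U ∪ Sum.inr '' (φ ⁻¹' U \ K)}

variable [T2Space Y]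

lemma dc_isBasis (φ : Y → X) (hφ : Continuous φ) :
    TopologicalSpace.IsTopologicalBasis (t := (inferInstance : TopologicalSpace (DC φ)))
      (dcSets φ) := by
  refine ⟨?_, ?_, rfl⟩
  · rintro t₁ (⟨V₁, hV₁, rfl⟩ | ⟨U₁, K₁, hU₁, hK₁, rfl⟩) t₂
      (⟨V₂, hV₂, rfl⟩ | ⟨U₂, K₂, hU₂, hK₂, rfl⟩) z hz
    · refine ⟨Sum.inr '' (V₁ ∩ V₂), Or.inl ⟨_, hV₁.inter hV₂, rfl⟩, ?_, ?_⟩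
      · obtain ⟨⟨y, hy1, rfl⟩, hz2⟩ := hz
        have hy2 : y ∈ V₂ := by
          obtain ⟨y', hy', he⟩ := hz2
          cases Sum.inr_injective he; exact hy'
        exact ⟨y, ⟨hy1, hy2⟩, rfl⟩
      · exact Set.subset_inter (Set.image_mono Set.inter_subset_left)
          (Set.image_mono Set.inter_subset_right)
    · -- V₁ ∩ [U₂,K₂]
      obtain ⟨⟨y, hy1, rfl⟩, hz2⟩ := hz
      have hy2 : y ∈ φ ⁻¹' U₂ \ K₂ := by
        rcases hz2 with ⟨x, _, he⟩ | ⟨y', hy', he⟩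
        · exact absurd he (by simp)
        · cases Sum.inr_injective he; exact hy'
      refine ⟨Sum.inr '' (V₁ ∩ (φ ⁻¹' U₂ \ K₂)),
        Or.inl ⟨_, hV₁.inter ((hU₂.preimage hφ).sdiff hK₂.isClosed), rfl⟩,
        ⟨y, ⟨hy1, hy2⟩, rfl⟩, ?_⟩
      refine Set.subset_inter (Set.image_mono Set.inter_subset_left) ?_
      exact (Set.image_mono Set.inter_subset_right).trans Set.subset_union_right
    · -- [U₁,K₁] ∩ V₂
      obtain ⟨hz1, ⟨y, hy2, rfl⟩⟩ := hz
      have hy1 : y ∈ φ ⁻¹' U₁ \ K₁ := by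
        rcases hz1 with ⟨x, _, he⟩ | ⟨y', hy', he⟩
        · exact absurd he (by simp)
        · cases Sum.inr_injective he; exact hy'
      refine ⟨Sum.inr '' ((φ ⁻¹' U₁ \ K₁) ∩ V₂),
        Or.inl ⟨_, ((hU₁.preimage hφ).sdiff hK₁.isClosed).inter hV₂, rfl⟩,
        ⟨y, ⟨hy1, hy2⟩, rfl⟩, ?_⟩
      refine Set.subset_inter ?_ (Set.image_mono Set.inter_subset_right)
      exact (Set.image_mono Set.inter_subset_left).trans Set.subset_union_right
    · -- [U₁,K₁] ∩ [U₂,K₂] = [U₁∩U₂, K₁∪K₂]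
      refine ⟨Sum.inl '' (U₁ ∩ U₂) ∪ Sum.inr '' (φ ⁻¹' (U₁ ∩ U₂) \ (K₁ ∪ K₂)),
        Or.inr ⟨_, _, hU₁.inter hU₂, hK₁.union hK₂, rfl⟩, ?_, ?_⟩
      · obtain ⟨hz1, hz2⟩ := hz
        rcases z with x | y
        · have hx1 : x ∈ U₁ := by
            rcases hz1 with ⟨x', hx', he⟩ | ⟨y', _, he⟩
            · cases Sum.inl_injective he; exact hx'
            · exact absurd he (by simp)
          have hx2 : x ∈ U₂ := by
            rcases hz2 with ⟨x', hx', he⟩ | ⟨y', _, he⟩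
            · cases Sum.inl_injective he; exact hx'
            · exact absurd he (by simp)
          exact Or.inl ⟨x, ⟨hx1, hx2⟩, rfl⟩
        · have hy1 : y ∈ φ ⁻¹' U₁ \ K₁ := by
            rcases hz1 with ⟨x', _, he⟩ | ⟨y', hy', he⟩
            · exact absurd he (by simp)
            · cases Sum.inr_injective he; exact hy'
          have hy2 : y ∈ φ ⁻¹' U₂ \ K₂ := by
            rcases hz2 with ⟨x', _, he⟩ | ⟨y', hy', he⟩
            · exact absurd he (by simp)
            · cases Sum.inr_injective he; exact hy'
          exact Or.inr ⟨y, ⟨⟨hy1.1, hy2.1⟩, fun hk => hk.elim hy1.2 hy2.2⟩, rfl⟩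
      · rintro z (⟨x, ⟨hx1, hx2⟩, rfl⟩ | ⟨y, ⟨⟨hyU1, hyU2⟩, hyK⟩, rfl⟩)
        · exact ⟨Or.inl ⟨x, hx1, rfl⟩, Or.inl ⟨x, hx2, rfl⟩⟩
        · exact ⟨Or.inr ⟨y, ⟨hyU1, fun hk => hyK (Or.inl hk)⟩, rfl⟩,
            Or.inr ⟨y, ⟨hyU2, fun hk => hyK (Or.inr hk)⟩, rfl⟩⟩
  · refine (Set.sUnion_eq_univ_iff (α := X ⊕ Y)).2 ?_
    intro z
    refine ⟨Sum.inl '' (Set.univ : Set X) ∪ Sum.inr '' (φ ⁻¹' Set.univ \ ∅),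
      Or.inr ⟨_, _, isOpen_univ, isCompact_empty, rfl⟩, ?_⟩
    rcases z with x | y
    · exact Or.inl ⟨x, trivial, rfl⟩
    · exact Or.inr ⟨y, ⟨trivial, fun h => h⟩, rfl⟩

lemma dc_nhds_inl (φ : Y → X) (hφ : Continuous φ) {O : Set (DC φ)} (hO : IsOpen O)
    {x : X} (hx : (Sum.inl x : DC φ) ∈ O) :
    ∃ U : Set X, IsOpen U ∧ x ∈ U ∧ ∃ K : Set Y, IsCompact K ∧
      (Sum.inl '' U ∪ Sum.inr '' (φ ⁻¹' U \ K) : Set (DC φ)) ⊆ O := by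
  obtain ⟨b, hb, hzb, hbO⟩ := (dc_isBasis φ hφ).exists_subset_of_mem_open hx hO
  rcases hb with ⟨V, hV, rfl⟩ | ⟨U, K, hU, hK, rfl⟩
  · obtain ⟨y, _, he⟩ := hzb
    exact absurd he (by simp)
  · have hxU : x ∈ U := by
      rcases hzb with ⟨x', hx', he⟩ | ⟨y', _, he⟩
      · cases Sum.inl_injective he; exact hx'
      · exact absurd he (by simp)
    exact ⟨U, hU, hxU, K, hK, hbO⟩

lemma dc_nhds_inr (φ : Y → X) (hφ : Continuous φ) {O : Set (DC φ)} (hO : IsOpen O)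
    {y : Y} (hy : (Sum.inr y : DC φ) ∈ O) :
    ∃ V : Set Y, IsOpen V ∧ y ∈ V ∧ (Sum.inr '' V : Set (DC φ)) ⊆ O := by
  obtain ⟨b, hb, hzb, hbO⟩ := (dc_isBasis φ hφ).exists_subset_of_mem_open hy hO
  rcases hb with ⟨V, hV, rfl⟩ | ⟨U, K, hU, hK, rfl⟩
  · obtain ⟨y', hy', he⟩ := hzb
    cases Sum.inr_injective he
    exact ⟨V, hV, hy', hbO⟩
  · have hyW : y ∈ φ ⁻¹' U \ K := by
      rcases hzb with ⟨x', _, he⟩ | ⟨y', hy', he⟩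
      · exact absurd he (by simp)
      · cases Sum.inr_injective he; exact hy'
    exact ⟨φ ⁻¹' U \ K, (hU.preimage hφ).sdiff hK.isClosed, hyW,
      Set.subset_union_right.trans' (Set.image_mono (le_refl _)) |>.trans hbO⟩

end DCsec
section Main

open TopologicalSpace Set

lemma getRight_mem_of_mem_image {X Y : Type*} {z : X ⊕ Y} {V : Set Y}
    (h : z.isRight = true) (hz : z ∈ Sum.inr '' V) : z.getRight h ∈ V := by
  obtain ⟨y, hy, rfl⟩ := hz
  simpa using hy

theorem auxMain {X Y : Type*} [TopologicalSpace X] [TopologicalSpace Y]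
    [T2Space X] [T2Space Y] [SecondCountableTopology X]
    (φ : Y → X) (hφ : Continuous φ) (hY : HereditarilySeparable (ℕ → Y)) :
    HereditarilySeparable (ℕ → DC φ) := by
  classical
  intro S
  set 𝔅 : Set (Set (ℕ → X)) := TopologicalSpace.countableBasis (ℕ → X) with h𝔅
  haveI : Countable ↥𝔅 := (TopologicalSpace.countable_countableBasis (ℕ → X)).to_subtype
  set r : DC φ → X := Sum.elim id φ with hr
  set T : Finset ℕ × Finset ℕ × ↥𝔅 → Set (ℕ → DC φ) := fun i =>
    {g | g ∈ S ∧ (∀ n ∈ i.1, Sum.isLeft (g n) = true) ∧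
      (∀ n ∈ i.2.1, Sum.isRight (g n) = true) ∧
      (fun m => r (g m)) ∈ (i.2.2 : Set (ℕ → X))} with hT
  refine lemL S T (fun i g hg => hg.1) (fun i => (↥i.2.1 → Y))
    (fun i => hs_finsetPi hY i.2.1)
    (fun i g n => Sum.getRight (g.1 n.1) (g.2.2.2.1 n.1 n.2)) ?_
  intro w hw O hO hwO
  obtain ⟨E, u, hu, hEu⟩ := isOpen_pi_iff.1 hO w hwO
  -- choose basic neighborhoods at each coordinate
  have hFex : ∀ n, n ∈ E → Sum.isLeft (w n) = true → ∃ U : Set X, IsOpen U ∧ r (w n) ∈ U ∧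
      ∃ K : Set Y, IsCompact K ∧ (Sum.inl '' U ∪ Sum.inr '' (φ ⁻¹' U \ K) : Set (DC φ)) ⊆ u n := by
    intro n hn hleft
    obtain ⟨x, hx⟩ := Sum.isLeft_iff.1 hleft
    obtain ⟨U, hU, hxU, K, hK, hsub⟩ :=
      dc_nhds_inl φ hφ (hu n hn).1 (hx ▸ (hu n hn).2)
    exact ⟨U, hU, by rw [hx]; exact hxU, K, hK, hsub⟩
  have hGex : ∀ n, n ∈ E → Sum.isRight (w n) = true → ∃ V : Set Y, IsOpen V ∧
      w n ∈ (Sum.inr '' V : Set (DC φ)) ∧ (Sum.inr '' V : Set (DC φ)) ⊆ u n := by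
    intro n hn hright
    obtain ⟨y, hyw⟩ := Sum.isRight_iff.1 hright
    obtain ⟨V, hV, hyV, hsub⟩ := dc_nhds_inr φ hφ (hu n hn).1 (hyw ▸ (hu n hn).2)
    exact ⟨V, hV, by rw [hyw]; exact ⟨y, hyV, rfl⟩, hsub⟩
  choose U hUopen hUmem K hKcp hUK using hFex
  choose V hVopen hVmem hVsub using hGex
  set F : Finset ℕ := E.filter (fun n => Sum.isLeft (w n) = true) with hF
  set G : Finset ℕ := E.filter (fun n => Sum.isRight (w n) = true) with hG
  have hFmem : ∀ n, n ∈ F → n ∈ E ∧ Sum.isLeft (w n) = true := fun n hn =>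
    Finset.mem_filter.1 hn
  have hGmem : ∀ n, n ∈ G → n ∈ E ∧ Sum.isRight (w n) = true := fun n hn =>
    Finset.mem_filter.1 hn
  set U' : ℕ → Set X := fun n =>
    if h : n ∈ F then U n (hFmem n h).1 (hFmem n h).2 else Set.univ with hU'
  have hWopen : IsOpen ((↑F : Set ℕ).pi U') := by
    refine isOpen_set_pi F.finite_toSet ?_
    intro n hn
    have hn' : n ∈ F := hn
    rw [hU']; simp only [dif_pos hn']
    exact hUopen n (hFmem n hn').1 (hFmem n hn').2
  have hrwW : (fun m => r (w m)) ∈ (↑F : Set ℕ).pi U' := by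
    intro n hn
    have hn' : n ∈ F := hn
    simp only [hU', dif_pos hn']
    exact hUmem n (hFmem n hn').1 (hFmem n hn').2
  obtain ⟨B, hB𝔅, hrB, hBW⟩ :=
    (TopologicalSpace.isBasis_countableBasis (ℕ → X)).exists_subset_of_mem_open hrwW hWopen
  refine ⟨(F, G, ⟨B, hB𝔅⟩), ⟨hw, fun n hn => (hFmem n hn).2, fun n hn => (hGmem n hn).2, hrB⟩,
    Set.pi Set.univ (fun n : ↥G => V n.1 (hGmem n.1 n.2).1 (hGmem n.1 n.2).2), ?_, ?_, ?_⟩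
  · exact isOpen_set_pi Set.finite_univ
      (fun n _ => hVopen n.1 (hGmem n.1 n.2).1 (hGmem n.1 n.2).2)
  · intro n _
    exact getRight_mem_of_mem_image _ (hVmem n.1 (hGmem n.1 n.2).1 (hGmem n.1 n.2).2)
  · intro w' hw'T hq
    refine hEu ?_
    intro n hn
    have hnE : n ∈ E := hn
    rcases hzw : w n with x | y
    · -- n ∈ F
      have hnF : n ∈ F := Finset.mem_filter.2 ⟨hnE, by rw [hzw]; rfl⟩
      obtain ⟨x', hx'⟩ := Sum.isLeft_iff.1 (hw'T.2.1 n hnF)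
      have h0 := hBW hw'T.2.2.2 n hnF
      rw [hU'] at h0
      simp only [dif_pos hnF] at h0
      rw [hx', hr] at h0
      refine hUK n (hFmem n hnF).1 (hFmem n hnF).2 (Or.inl ⟨x', ?_, hx'.symm⟩)
      simpa using h0
    · -- n ∈ G
      have hnG : n ∈ G := Finset.mem_filter.2 ⟨hnE, by rw [hzw]; rfl⟩
      have h' : Sum.isRight (w' n) = true := hw'T.2.2.1 n hnG
      have hmem := hq ⟨n, hnG⟩ (Set.mem_univ _)
      refine hVsub n (hGmem n hnG).1 (hGmem n hnG).2
        ⟨Sum.getRight (w' n) h', ?_, Sum.inr_getRight _ _⟩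
      exact hmem
end Main


/-- If `X` is second countable and `Y^ω` is hereditarily separable, then `Z^ω` is hereditarily
separable, where `Z = Y ∪̇_φ X`. -/
theorem dotCup_pow_hs {X Y : Type*} [TopologicalSpace X] [TopologicalSpace Y]
    [T2Space X] [T2Space Y] [SecondCountableTopology X]
    (φ : Y → X) (hφ : Continuous φ)
    (hY : HereditarilySeparable (ℕ → Y)) :
    @HereditarilySeparable (ℕ → X ⊕ Y)
      (@Pi.topologicalSpace ℕ (fun _ => X ⊕ Y) (fun _ => dotCup φ)) := by
  exact auxMain φ hφ hY
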